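/- There exists a constant c > 0 such that for every T > 0, every finite (bounded) Radon measure ν on [0,∞) and every finite Radon measure μ on [0,T), the function v_{ν,μ}(t,x) = ∫_{[0,∞)} Ẽ(t,x,y) dν(y) + 2∫_{[0,t)} E(t−s,x) dμ(s) satisfies the Marcinkiewicz-type estimates: ∫∫_G |v_{ν,μ}(t,x)| dx dt ≤ c (‖ν‖ + ‖μ‖) |G|^{2/3} for every Borel set G ⊂ (0,T)×(0,∞) of finite measure, and ∫_F |v_{ν,μ}(t,0)| dt ≤ c (‖ν‖ + ‖μ‖) |F|^{1/2} for every Borel set F ⊂ (0,T) of finite measure, where ‖·‖ denotes the total variation of the measure. Equivalently, v_{ν,μ} belongs to the Marcinkiewicz space M³((0,T)×(0,∞)) and its boundary trace v_{ν,μ}(·,0) to M²(0,T), with norms bounded by c(‖ν‖ + ‖μ‖). -/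

import Mathlib

open MeasureTheory Real Set

/-- The one-dimensional Gaussian heat kernel `E(t,x) = (4πt)^{−1/2} e^{−x²/(4t)}`
(extended by `0` for `t ≤ 0`). -/
noncomputable def heatE (t x : ℝ) : ℝ :=
  if 0 < t then (Real.sqrt (4 * π * t))⁻¹ * Real.exp (-(x ^ 2) / (4 * t)) else 0

/-- `Ẽ(t,x,y) = E(t,x−y) + E(t,x+y)`. -/
noncomputable def heatEtil (t x y : ℝ) : ℝ := heatE t (x - y) + heatE t (x + y)

/-- The solution `v_{ν,μ}` of the heat equation on `(0,T)×(0,∞)` with boundary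
flux `−v_x(·,0) = μ` and initial datum `ν`. -/
noncomputable def vSol (ν μ : Measure ℝ) (t x : ℝ) : ℝ :=
  (∫ y, heatEtil t x y ∂ν) + 2 * ∫ s in Iio t, heatE (t - s) x ∂μ


lemma heatE_nonneg (t x : ℝ) : 0 ≤ heatE t x := by
  unfold heatE; split
  · positivity
  · exact le_rfl

lemma heatE_zero_of_nonpos {t : ℝ} (ht : ¬ 0 < t) (x : ℝ) : heatE t x = 0 := by
  rw [heatE, if_neg ht]

lemma measurable_heatE : Measurable fun p : ℝ × ℝ => heatE p.1 p.2 := by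
  unfold heatE
  apply Measurable.ite (measurableSet_lt measurable_const measurable_fst)
  · exact ((measurable_const.mul measurable_fst).sqrt.inv).mul
      (((measurable_snd.pow measurable_const).neg.div
        (measurable_const.mul measurable_fst)).exp)
  · exact measurable_const

lemma heatE_le (t x : ℝ) : heatE t x ≤ (Real.sqrt (4 * π * t))⁻¹ := by
  unfold heatE; split
  · rename_i ht
    have h1 : Real.exp (-(x ^ 2) / (4 * t)) ≤ 1 := by
      rw [Real.exp_le_one_iff]
      apply div_nonpos_of_nonpos_of_nonneg
      · simp [sq_nonneg x]
      · positivity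
    calc (Real.sqrt (4 * π * t))⁻¹ * Real.exp (-(x ^ 2) / (4 * t))
        ≤ (Real.sqrt (4 * π * t))⁻¹ * 1 := by
          apply mul_le_mul_of_nonneg_left h1; positivity
      _ = _ := mul_one _
  · positivity

lemma measurable_ker (a b : ℝ) :
    Measurable fun q : ℝ × ℝ => ENNReal.ofReal (heatE (q.1 - a) (q.2 - b)) :=
  ENNReal.measurable_ofReal.comp (measurable_heatE.comp
    ((measurable_fst.sub measurable_const).prodMk (measurable_snd.sub measurable_const)))

lemma heatE_eq {t : ℝ} (ht : 0 < t) (x : ℝ) :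
    heatE t x = (Real.sqrt (4 * π * t))⁻¹ * Real.exp (-(1/(4*t)) * x ^ 2) := by
  have h : -(x ^ 2) / (4 * t) = -(1/(4*t)) * x ^ 2 := by ring
  rw [heatE, if_pos ht, h]

lemma integrable_heatE {t : ℝ} (ht : 0 < t) (b : ℝ) :
    Integrable (fun x : ℝ => heatE t (x - b)) := by
  have h4t : (0:ℝ) < 1 / (4 * t) := by positivity
  have h := ((integrable_exp_neg_mul_sq h4t).comp_sub_right b).const_mul
    ((Real.sqrt (4 * π * t))⁻¹)
  refine h.congr (Filter.Eventually.of_forall fun x => ?_)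
  simp only [heatE_eq ht]

lemma integral_heatE {t : ℝ} (ht : 0 < t) (b : ℝ) :
    ∫ x : ℝ, heatE t (x - b) = 1 := by
  have h4t : (0:ℝ) < 1 / (4 * t) := by positivity
  calc ∫ x : ℝ, heatE t (x - b)
      = (Real.sqrt (4 * π * t))⁻¹ * ∫ x : ℝ, Real.exp (-(1/(4*t)) * (x - b) ^ 2) := by
        rw [← integral_const_mul]; congr 1; ext x; rw [heatE_eq ht]
    _ = (Real.sqrt (4 * π * t))⁻¹ * ∫ x : ℝ, Real.exp (-(1/(4*t)) * x ^ 2) := by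
        congr 1; exact integral_sub_right_eq_self (fun x => Real.exp (-(1/(4*t)) * x ^ 2)) b
    _ = (Real.sqrt (4 * π * t))⁻¹ * Real.sqrt (π / (1/(4*t))) := by
        rw [integral_gaussian]
    _ = 1 := by
        have : π / (1/(4*t)) = 4 * π * t := by field_simp
        rw [this]
        exact inv_mul_cancel₀ (by positivity)

lemma lintegral_heatE {t : ℝ} (ht : 0 < t) (b : ℝ) :
    ∫⁻ x : ℝ, ENNReal.ofReal (heatE t (x - b)) = 1 := by
  rw [← ofReal_integral_eq_lintegral_ofReal (integrable_heatE ht b)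
    (Filter.Eventually.of_forall fun x => heatE_nonneg t (x - b)),
    integral_heatE ht b, ENNReal.ofReal_one]

lemma lem2D (a b : ℝ) (G : Set (ℝ × ℝ)) :
    ∫⁻ q in G, ENNReal.ofReal (heatE (q.1 - a) (q.2 - b))
      ≤ 2 * (volume G) ^ ((2:ℝ)/3) := by
  rcases eq_or_ne (volume G) ⊤ with htop | hfin
  · rw [htop, ENNReal.top_rpow_of_pos (by norm_num)]
    simp
  rcases eq_or_ne (volume G) 0 with h0 | hne
  · rw [Measure.restrict_eq_zero.mpr h0, lintegral_zero_measure]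
    exact zero_le
  set M : ℝ := (volume G).toReal with hM
  have hMpos : 0 < M := ENNReal.toReal_pos hne hfin
  set t₀ : ℝ := M ^ ((2:ℝ)/3) / (4 * π) with ht₀
  have ht₀pos : 0 < t₀ := by positivity
  set S : Set (ℝ × ℝ) := Ioo a (a + t₀) ×ˢ (univ : Set ℝ) with hSdef
  have hsplit : ∫⁻ q in G, ENNReal.ofReal (heatE (q.1 - a) (q.2 - b))
      ≤ (∫⁻ q in G ∩ S, ENNReal.ofReal (heatE (q.1 - a) (q.2 - b)))
        + ∫⁻ q in G \ S, ENNReal.ofReal (heatE (q.1 - a) (q.2 - b)) := by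
    nth_rewrite 1 [← Set.inter_union_diff G S]
    exact lintegral_union_le _ _ _
  -- Part 1
  have hpart1 : (∫⁻ q in G ∩ S, ENNReal.ofReal (heatE (q.1 - a) (q.2 - b)))
      ≤ ENNReal.ofReal t₀ := by
    refine le_trans (lintegral_mono_set inter_subset_right) ?_
    rw [hSdef,
      show (volume : Measure (ℝ × ℝ)).restrict (Ioo a (a + t₀) ×ˢ (univ : Set ℝ))
          = (volume.restrict (Ioo a (a + t₀))).prod (volume.restrict univ) by
        rw [Measure.prod_restrict, ← Measure.volume_eq_prod],
      Measure.restrict_univ,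
      lintegral_prod _ (measurable_ker a b).aemeasurable]
    have : ∫⁻ t in Ioo a (a + t₀), ∫⁻ x, ENNReal.ofReal (heatE (t - a) (x - b))
        = ∫⁻ _t in Ioo a (a + t₀), (1 : ENNReal) := by
      refine setLIntegral_congr_fun measurableSet_Ioo (fun t ht => ?_)
      exact lintegral_heatE (by have := ht.1; linarith) b
    rw [this, setLIntegral_one, Real.volume_Ioo]
    simp
  -- Part 2
  have hbound : ∀ q : ℝ × ℝ, q ∈ G \ S →
      ENNReal.ofReal (heatE (q.1 - a) (q.2 - b)) ≤ ENNReal.ofReal (M ^ (-(1:ℝ)/3)) := by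
    intro q hq
    apply ENNReal.ofReal_le_ofReal
    rcases lt_or_ge a q.1 with h1 | h1
    · have h2 : a + t₀ ≤ q.1 := by
        by_contra h3
        exact hq.2 ⟨⟨h1, lt_of_not_ge h3⟩, mem_univ _⟩
      have hs : t₀ ≤ q.1 - a := by linarith
      refine le_trans (heatE_le _ _) ?_
      have h4 : Real.sqrt (4 * π * t₀) ≤ Real.sqrt (4 * π * (q.1 - a)) := by
        apply Real.sqrt_le_sqrt; nlinarith [Real.pi_pos]
      have h5 : Real.sqrt (4 * π * t₀) = M ^ ((1:ℝ)/3) := by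
        rw [ht₀, show 4 * π * (M ^ ((2:ℝ)/3) / (4 * π)) = M ^ ((2:ℝ)/3) by
          field_simp]
        rw [show ((1:ℝ)/3) = (2:ℝ)/3 * (1/2) by norm_num,
          Real.rpow_mul hMpos.le, ← Real.sqrt_eq_rpow]
      calc (Real.sqrt (4 * π * (q.1 - a)))⁻¹ ≤ (Real.sqrt (4 * π * t₀))⁻¹ := by
            apply inv_anti₀ (by positivity) h4
        _ = M ^ (-(1:ℝ)/3) := by
            rw [h5, ← Real.rpow_neg hMpos.le]; norm_num
    · rw [heatE_zero_of_nonpos (by simp; linarith)]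
      positivity
  have hpart2 : (∫⁻ q in G \ S, ENNReal.ofReal (heatE (q.1 - a) (q.2 - b)))
      ≤ ENNReal.ofReal (M ^ ((2:ℝ)/3)) := by
    calc (∫⁻ q in G \ S, ENNReal.ofReal (heatE (q.1 - a) (q.2 - b)))
        ≤ ∫⁻ _q in G \ S, ENNReal.ofReal (M ^ (-(1:ℝ)/3)) :=
          setLIntegral_mono_ae (measurable_const.aemeasurable)
            (ae_of_all _ hbound)
      _ = ENNReal.ofReal (M ^ (-(1:ℝ)/3)) * volume (G \ S) := setLIntegral_const _ _
      _ ≤ ENNReal.ofReal (M ^ (-(1:ℝ)/3)) * volume G := by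
          exact mul_le_mul_right (measure_mono diff_subset) _
      _ = ENNReal.ofReal (M ^ ((2:ℝ)/3)) := by
          rw [← ENNReal.ofReal_toReal hfin, ← hM, ← ENNReal.ofReal_mul (by positivity)]
          congr 1
          rw [show M ^ (-(1:ℝ)/3) * M = M ^ (-(1:ℝ)/3) * M ^ (1:ℝ) by rw [Real.rpow_one],
            ← Real.rpow_add hMpos]
          norm_num
  calc ∫⁻ q in G, ENNReal.ofReal (heatE (q.1 - a) (q.2 - b))
      ≤ ENNReal.ofReal t₀ + ENNReal.ofReal (M ^ ((2:ℝ)/3)) :=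
        le_trans hsplit (add_le_add hpart1 hpart2)
    _ ≤ ENNReal.ofReal (2 * M ^ ((2:ℝ)/3)) := by
        rw [← ENNReal.ofReal_add ht₀pos.le (by positivity)]
        apply ENNReal.ofReal_le_ofReal
        have hpi : (1:ℝ) ≤ 4 * π := by nlinarith [Real.pi_gt_three]
        have : t₀ ≤ M ^ ((2:ℝ)/3) := by
          rw [ht₀, div_le_iff₀ (by positivity)]
          nlinarith [Real.rpow_nonneg hMpos.le ((2:ℝ)/3)]
        linarith
    _ = 2 * (volume G) ^ ((2:ℝ)/3) := by
        rw [ENNReal.ofReal_mul (by norm_num), ← ENNReal.ofReal_rpow_of_pos hMpos,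
          ENNReal.ofReal_toReal hfin]
        norm_num

lemma heatE_le_rpow {t s x : ℝ} (h : s < t) : heatE (t - s) x ≤ (t - s) ^ (-(1:ℝ)/2) := by
  refine le_trans (heatE_le _ _) ?_
  have hts : (0:ℝ) < t - s := by linarith
  have h1 : Real.sqrt (t - s) ≤ Real.sqrt (4 * π * (t - s)) := by
    apply Real.sqrt_le_sqrt; nlinarith [Real.pi_gt_three]
  calc (Real.sqrt (4 * π * (t - s)))⁻¹ ≤ (Real.sqrt (t - s))⁻¹ :=
        inv_anti₀ (Real.sqrt_pos.mpr hts) h1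
    _ = (t - s) ^ (-(1:ℝ)/2) := by
        rw [Real.sqrt_eq_rpow, ← Real.rpow_neg hts.le]; norm_num

lemma lem1D (a x : ℝ) (F : Set ℝ) :
    ∫⁻ t in F, ENNReal.ofReal (heatE (t - a) x) ≤ 3 * (volume F) ^ ((1:ℝ)/2) := by
  rcases eq_or_ne (volume F) ⊤ with htop | hfin
  · rw [htop, ENNReal.top_rpow_of_pos (by norm_num)]; simp
  rcases eq_or_ne (volume F) 0 with h0 | hne
  · rw [Measure.restrict_eq_zero.mpr h0, lintegral_zero_measure]; exact zero_le
  set M : ℝ := (volume F).toReal with hM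
  have hMpos : 0 < M := ENNReal.toReal_pos hne hfin
  set S : Set ℝ := Ioc a (a + M) with hSdef
  have hsplit : ∫⁻ t in F, ENNReal.ofReal (heatE (t - a) x)
      ≤ (∫⁻ t in F ∩ S, ENNReal.ofReal (heatE (t - a) x))
        + ∫⁻ t in F \ S, ENNReal.ofReal (heatE (t - a) x) := by
    nth_rewrite 1 [← Set.inter_union_diff F S]
    exact lintegral_union_le _ _ _
  have hii : IntervalIntegrable (fun t : ℝ => (t - a) ^ (-(1:ℝ)/2)) volume a (a + M) := by
    have := (intervalIntegral.intervalIntegrable_rpow' (a := 0) (b := M)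
      (r := -(1:ℝ)/2) (by norm_num)).comp_sub_right a
    simpa [add_comm] using this
  have hint : ∫ t in Ioc a (a + M), (t - a) ^ (-(1:ℝ)/2) = 2 * Real.sqrt M := by
    rw [← intervalIntegral.integral_of_le (by linarith)]
    rw [intervalIntegral.integral_comp_sub_right (fun t => t ^ (-(1:ℝ)/2)) a]
    simp only [sub_self, add_sub_cancel_left]
    rw [integral_rpow (Or.inl (by norm_num))]
    rw [Real.sqrt_eq_rpow]
    norm_num
    ring
  have hpart1 : (∫⁻ t in F ∩ S, ENNReal.ofReal (heatE (t - a) x))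
      ≤ ENNReal.ofReal (2 * Real.sqrt M) := by
    calc (∫⁻ t in F ∩ S, ENNReal.ofReal (heatE (t - a) x))
        ≤ ∫⁻ t in S, ENNReal.ofReal (heatE (t - a) x) :=
          lintegral_mono_set inter_subset_right
      _ ≤ ∫⁻ t in S, ENNReal.ofReal ((t - a) ^ (-(1:ℝ)/2)) := by
          refine setLIntegral_mono' measurableSet_Ioc fun t ht => ?_
          exact ENNReal.ofReal_le_ofReal (heatE_le_rpow ht.1)
      _ = ENNReal.ofReal (∫ t in Ioc a (a + M), (t - a) ^ (-(1:ℝ)/2)) := by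
          rw [ofReal_integral_eq_lintegral_ofReal]
          · exact (intervalIntegrable_iff_integrableOn_Ioc_of_le (by linarith)).mp hii
          · refine (ae_restrict_iff' measurableSet_Ioc).mpr (ae_of_all _ fun t ht => ?_)
            exact Real.rpow_nonneg (by linarith [ht.1]) _
      _ = ENNReal.ofReal (2 * Real.sqrt M) := by rw [hint]
  have hpart2 : (∫⁻ t in F \ S, ENNReal.ofReal (heatE (t - a) x))
      ≤ ENNReal.ofReal (Real.sqrt M) := by
    have hb : ∀ t ∈ F \ S, ENNReal.ofReal (heatE (t - a) x)
        ≤ ENNReal.ofReal (M ^ (-(1:ℝ)/2)) := by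
      intro t ht
      apply ENNReal.ofReal_le_ofReal
      rcases le_or_gt t a with h1 | h1
      · rw [heatE_zero_of_nonpos (by simp; linarith)]
        positivity
      · have h2 : a + M < t := by
          rcases lt_or_ge (a + M) t with h | h
          · exact h
          · exact absurd ⟨h1, h⟩ ht.2
        calc heatE (t - a) x ≤ (t - a) ^ (-(1:ℝ)/2) := heatE_le_rpow h1
          _ ≤ M ^ (-(1:ℝ)/2) := by
              apply Real.rpow_le_rpow_of_nonpos hMpos (by linarith) (by norm_num)
    calc (∫⁻ t in F \ S, ENNReal.ofReal (heatE (t - a) x))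
        ≤ ∫⁻ _t in F \ S, ENNReal.ofReal (M ^ (-(1:ℝ)/2)) :=
          setLIntegral_mono_ae measurable_const.aemeasurable (ae_of_all _ hb)
      _ = ENNReal.ofReal (M ^ (-(1:ℝ)/2)) * volume (F \ S) := setLIntegral_const _ _
      _ ≤ ENNReal.ofReal (M ^ (-(1:ℝ)/2)) * volume F :=
          mul_le_mul_right (measure_mono diff_subset) _
      _ = ENNReal.ofReal (Real.sqrt M) := by
          rw [← ENNReal.ofReal_toReal hfin, ← hM, ← ENNReal.ofReal_mul (by positivity)]
          congr 1
          rw [show M ^ (-(1:ℝ)/2) * M = M ^ (-(1:ℝ)/2) * M ^ (1:ℝ) by rw [Real.rpow_one],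
            ← Real.rpow_add hMpos, Real.sqrt_eq_rpow]
          norm_num
  calc ∫⁻ t in F, ENNReal.ofReal (heatE (t - a) x)
      ≤ ENNReal.ofReal (2 * Real.sqrt M) + ENNReal.ofReal (Real.sqrt M) :=
        le_trans hsplit (add_le_add hpart1 hpart2)
    _ = ENNReal.ofReal (3 * Real.sqrt M) := by
        rw [← ENNReal.ofReal_add (by positivity) (by positivity)]; ring_nf
    _ = 3 * (volume F) ^ ((1:ℝ)/2) := by
        rw [Real.sqrt_eq_rpow, ENNReal.ofReal_mul (by norm_num),
          ← ENNReal.ofReal_rpow_of_pos hMpos, ENNReal.ofReal_toReal hfin]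
        norm_num

lemma ofReal_int_le {α : Type*} [MeasurableSpace α] (μ : Measure α) (f : α → ℝ)
    (hf : ∀ a, 0 ≤ f a) :
    ENNReal.ofReal (∫ a, f a ∂μ) ≤ ∫⁻ a, ENNReal.ofReal (f a) ∂μ := by
  by_cases h : Integrable f μ
  · rw [ofReal_integral_eq_lintegral_ofReal h (ae_of_all _ hf)]
  · rw [integral_undef h]; simp

lemma meas_y1 (t x : ℝ) : Measurable fun y : ℝ => ENNReal.ofReal (heatE t (x - y)) :=
  ENNReal.measurable_ofReal.comp (measurable_heatE.comp
    (measurable_const.prodMk (measurable_const.sub measurable_id)))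

lemma meas_y2 (t x : ℝ) : Measurable fun y : ℝ => ENNReal.ofReal (heatE t (x + y)) :=
  ENNReal.measurable_ofReal.comp (measurable_heatE.comp
    (measurable_const.prodMk (measurable_const.add measurable_id)))

lemma meas_s (t x : ℝ) : Measurable fun s : ℝ => ENNReal.ofReal (heatE (t - s) x) :=
  ENNReal.measurable_ofReal.comp (measurable_heatE.comp
    ((measurable_const.sub measurable_id).prodMk measurable_const))

lemma vSol_bound (ν μ : Measure ℝ) (t x : ℝ) :
    ENNReal.ofReal |vSol ν μ t x|
      ≤ (∫⁻ y, ENNReal.ofReal (heatE t (x - y)) ∂ν)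
        + (∫⁻ y, ENNReal.ofReal (heatE t (x + y)) ∂ν)
        + 2 * ∫⁻ s, ENNReal.ofReal (heatE (t - s) x) ∂μ := by
  have hA : 0 ≤ ∫ y, heatEtil t x y ∂ν :=
    integral_nonneg fun y => add_nonneg (heatE_nonneg _ _) (heatE_nonneg _ _)
  have hB : 0 ≤ ∫ s in Iio t, heatE (t - s) x ∂μ :=
    integral_nonneg fun s => heatE_nonneg _ _
  rw [vSol, abs_of_nonneg (by linarith)]
  refine le_trans ENNReal.ofReal_add_le (add_le_add ?_ ?_)
  · calc ENNReal.ofReal (∫ y, heatEtil t x y ∂ν)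
        ≤ ∫⁻ y, ENNReal.ofReal (heatEtil t x y) ∂ν :=
          ofReal_int_le ν _ fun y => add_nonneg (heatE_nonneg _ _) (heatE_nonneg _ _)
      _ = ∫⁻ y, (ENNReal.ofReal (heatE t (x - y)) + ENNReal.ofReal (heatE t (x + y))) ∂ν := by
          congr 1; ext y
          exact ENNReal.ofReal_add (heatE_nonneg _ _) (heatE_nonneg _ _)
      _ = (∫⁻ y, ENNReal.ofReal (heatE t (x - y)) ∂ν)
            + ∫⁻ y, ENNReal.ofReal (heatE t (x + y)) ∂ν :=
          lintegral_add_left (meas_y1 t x) _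
  · rw [ENNReal.ofReal_mul (by norm_num), show ENNReal.ofReal (2:ℝ) = 2 by
      simp [ENNReal.ofReal_ofNat]]
    refine mul_le_mul_right ?_ 2
    calc ENNReal.ofReal (∫ s in Iio t, heatE (t - s) x ∂μ)
        ≤ ∫⁻ s in Iio t, ENNReal.ofReal (heatE (t - s) x) ∂μ :=
          ofReal_int_le _ _ fun s => heatE_nonneg _ _
      _ ≤ ∫⁻ s, ENNReal.ofReal (heatE (t - s) x) ∂μ := setLIntegral_le_lintegral _ _

lemma swap_bound {α : Type*} [MeasurableSpace α] (ρ : Measure α) [SFinite ρ]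
    (ν : Measure ℝ) [IsFiniteMeasure ν] (h : α → ℝ → ENNReal)
    (hm : Measurable (Function.uncurry h)) (K : ENNReal)
    (hK : ∀ y, ∫⁻ a, h a y ∂ρ ≤ K) :
    ∫⁻ a, (∫⁻ y, h a y ∂ν) ∂ρ ≤ ν univ * K := by
  rw [lintegral_lintegral_swap hm.aemeasurable]
  calc ∫⁻ y, ∫⁻ a, h a y ∂ρ ∂ν ≤ ∫⁻ _y, K ∂ν := lintegral_mono fun y => hK y
    _ = ν univ * K := by rw [lintegral_const, mul_comm]

theorem marcinkiewicz_estimates :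
    ∃ c : ℝ, 0 < c ∧
      ∀ T : ℝ, 0 < T → ∀ ν μ : Measure ℝ,
        IsFiniteMeasure ν → IsFiniteMeasure μ →
        ν (Iio 0) = 0 → μ (Iio 0) = 0 → μ (Ici T) = 0 →
        (∀ G : Set (ℝ × ℝ), MeasurableSet G → G ⊆ Ioo 0 T ×ˢ Ioi 0 →
          (∫⁻ q in G, ENNReal.ofReal |vSol ν μ q.1 q.2| ∂(volume : Measure (ℝ × ℝ)))
            ≤ ENNReal.ofReal (c * ((ν univ).toReal + (μ univ).toReal))
                * (volume G) ^ ((2:ℝ) / 3)) ∧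
        (∀ F : Set ℝ, MeasurableSet F → F ⊆ Ioo 0 T →
          (∫⁻ t in F, ENNReal.ofReal |vSol ν μ t 0|)
            ≤ ENNReal.ofReal (c * ((ν univ).toReal + (μ univ).toReal))
                * (volume F) ^ ((1:ℝ) / 2)) := by
  refine ⟨6, by norm_num, fun T hT ν μ hνf hμf hν0 hμ0 hμT => ?_⟩
  haveI := hνf; haveI := hμf
  set aν : ℝ := (ν univ).toReal with haν
  set aμ : ℝ := (μ univ).toReal with haμ
  have hνU : ν univ = ENNReal.ofReal aν := (ENNReal.ofReal_toReal (measure_ne_top ν univ)).symm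
  have hμU : μ univ = ENNReal.ofReal aμ := (ENNReal.ofReal_toReal (measure_ne_top μ univ)).symm
  have hcoef : ENNReal.ofReal (6 * (aν + aμ)) = 6 * (ν univ) + 6 * (μ univ) := by
    rw [ENNReal.ofReal_mul (by norm_num), ENNReal.ofReal_add ENNReal.toReal_nonneg
      ENNReal.toReal_nonneg, hνU, hμU]
    norm_num
    ring
  constructor
  · intro G hG hGsub
    set K : ENNReal := 2 * (volume G) ^ ((2:ℝ)/3) with hK
    have hu1 : Measurable (Function.uncurry fun (q : ℝ × ℝ) (y : ℝ) =>
        ENNReal.ofReal (heatE q.1 (q.2 - y))) :=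
      ENNReal.measurable_ofReal.comp (measurable_heatE.comp
        ((measurable_fst.fst).prodMk ((measurable_fst.snd).sub measurable_snd)))
    have hu2 : Measurable (Function.uncurry fun (q : ℝ × ℝ) (y : ℝ) =>
        ENNReal.ofReal (heatE q.1 (q.2 + y))) :=
      ENNReal.measurable_ofReal.comp (measurable_heatE.comp
        ((measurable_fst.fst).prodMk ((measurable_fst.snd).add measurable_snd)))
    have hu3 : Measurable (Function.uncurry fun (q : ℝ × ℝ) (s : ℝ) =>
        ENNReal.ofReal (heatE (q.1 - s) q.2)) :=
      ENNReal.measurable_ofReal.comp (measurable_heatE.comp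
        (((measurable_fst.fst).sub measurable_snd).prodMk (measurable_fst.snd)))
    have hs1 : ∫⁻ q in G, (∫⁻ y, ENNReal.ofReal (heatE q.1 (q.2 - y)) ∂ν) ≤ ν univ * K := by
      refine swap_bound _ ν _ hu1 K fun y => ?_
      refine le_trans (le_of_eq ?_) (lem2D 0 y G)
      simp
    have hs2 : ∫⁻ q in G, (∫⁻ y, ENNReal.ofReal (heatE q.1 (q.2 + y)) ∂ν) ≤ ν univ * K := by
      refine swap_bound _ ν _ hu2 K fun y => ?_
      refine le_trans (le_of_eq ?_) (lem2D 0 (-y) G)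
      simp [sub_neg_eq_add]
    have hs3 : ∫⁻ q in G, (∫⁻ s, ENNReal.ofReal (heatE (q.1 - s) q.2) ∂μ) ≤ μ univ * K := by
      refine swap_bound _ μ _ hu3 K fun s => ?_
      refine le_trans (le_of_eq ?_) (lem2D s 0 G)
      simp
    calc (∫⁻ q in G, ENNReal.ofReal |vSol ν μ q.1 q.2|)
        ≤ ∫⁻ q in G, ((∫⁻ y, ENNReal.ofReal (heatE q.1 (q.2 - y)) ∂ν)
            + (∫⁻ y, ENNReal.ofReal (heatE q.1 (q.2 + y)) ∂ν)
            + 2 * ∫⁻ s, ENNReal.ofReal (heatE (q.1 - s) q.2) ∂μ) :=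
          lintegral_mono fun q => vSol_bound ν μ q.1 q.2
      _ = (∫⁻ q in G, (∫⁻ y, ENNReal.ofReal (heatE q.1 (q.2 - y)) ∂ν))
            + (∫⁻ q in G, (∫⁻ y, ENNReal.ofReal (heatE q.1 (q.2 + y)) ∂ν))
            + ∫⁻ q in G, (2 * ∫⁻ s, ENNReal.ofReal (heatE (q.1 - s) q.2) ∂μ) := by
          rw [lintegral_add_left (f := fun q : ℝ × ℝ => (∫⁻ y, ENNReal.ofReal (heatE q.1 (q.2 - y)) ∂ν)
              + ∫⁻ y, ENNReal.ofReal (heatE q.1 (q.2 + y)) ∂ν)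
              (hu1.lintegral_prod_right.add hu2.lintegral_prod_right),
            lintegral_add_left hu1.lintegral_prod_right]
      _ = (∫⁻ q in G, (∫⁻ y, ENNReal.ofReal (heatE q.1 (q.2 - y)) ∂ν))
            + (∫⁻ q in G, (∫⁻ y, ENNReal.ofReal (heatE q.1 (q.2 + y)) ∂ν))
            + 2 * ∫⁻ q in G, (∫⁻ s, ENNReal.ofReal (heatE (q.1 - s) q.2) ∂μ) := by
          rw [lintegral_const_mul' _ _ (by norm_num)]
      _ ≤ ν univ * K + ν univ * K + 2 * (μ univ * K) :=
          add_le_add (add_le_add hs1 hs2) (mul_le_mul_right hs3 2)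
      _ = (2 * (ν univ) + 2 * (μ univ)) * K := by ring
      _ ≤ (6 * (ν univ) + 6 * (μ univ)) * ((volume G) ^ ((2:ℝ)/3)) := by
          rw [hK]
          calc (2 * (ν univ) + 2 * (μ univ)) * (2 * (volume G) ^ ((2:ℝ)/3))
              = (4 * (ν univ) + 4 * (μ univ)) * ((volume G) ^ ((2:ℝ)/3)) := by ring
            _ ≤ _ := by
                apply mul_le_mul_left
                exact add_le_add (mul_le_mul_left (by norm_num) _)
                  (mul_le_mul_left (by norm_num) _)
      _ = ENNReal.ofReal (6 * (aν + aμ)) * ((volume G) ^ ((2:ℝ)/3)) := by rw [hcoef]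
  · intro F hF hFsub
    set K : ENNReal := 3 * (volume F) ^ ((1:ℝ)/2) with hK
    have hu1 : Measurable (Function.uncurry fun (t : ℝ) (y : ℝ) =>
        ENNReal.ofReal (heatE t (0 - y))) :=
      ENNReal.measurable_ofReal.comp (measurable_heatE.comp
        (measurable_fst.prodMk (measurable_const.sub measurable_snd)))
    have hu2 : Measurable (Function.uncurry fun (t : ℝ) (y : ℝ) =>
        ENNReal.ofReal (heatE t (0 + y))) :=
      ENNReal.measurable_ofReal.comp (measurable_heatE.comp
        (measurable_fst.prodMk (measurable_const.add measurable_snd)))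
    have hu3 : Measurable (Function.uncurry fun (t : ℝ) (s : ℝ) =>
        ENNReal.ofReal (heatE (t - s) 0)) :=
      ENNReal.measurable_ofReal.comp (measurable_heatE.comp
        ((measurable_fst.sub measurable_snd).prodMk measurable_const))
    have hs1 : ∫⁻ t in F, (∫⁻ y, ENNReal.ofReal (heatE t (0 - y)) ∂ν) ≤ ν univ * K := by
      refine swap_bound _ ν _ hu1 K fun y => ?_
      refine le_trans (le_of_eq ?_) (lem1D 0 (0 - y) F)
      simp
    have hs2 : ∫⁻ t in F, (∫⁻ y, ENNReal.ofReal (heatE t (0 + y)) ∂ν) ≤ ν univ * K := by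
      refine swap_bound _ ν _ hu2 K fun y => ?_
      refine le_trans (le_of_eq ?_) (lem1D 0 (0 + y) F)
      simp
    have hs3 : ∫⁻ t in F, (∫⁻ s, ENNReal.ofReal (heatE (t - s) 0) ∂μ) ≤ μ univ * K := by
      refine swap_bound _ μ _ hu3 K fun s => ?_
      exact lem1D s 0 F
    calc (∫⁻ t in F, ENNReal.ofReal |vSol ν μ t 0|)
        ≤ ∫⁻ t in F, ((∫⁻ y, ENNReal.ofReal (heatE t (0 - y)) ∂ν)
            + (∫⁻ y, ENNReal.ofReal (heatE t (0 + y)) ∂ν)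
            + 2 * ∫⁻ s, ENNReal.ofReal (heatE (t - s) 0) ∂μ) :=
          lintegral_mono fun t => vSol_bound ν μ t 0
      _ = (∫⁻ t in F, (∫⁻ y, ENNReal.ofReal (heatE t (0 - y)) ∂ν))
            + (∫⁻ t in F, (∫⁻ y, ENNReal.ofReal (heatE t (0 + y)) ∂ν))
            + ∫⁻ t in F, (2 * ∫⁻ s, ENNReal.ofReal (heatE (t - s) 0) ∂μ) := by
          rw [lintegral_add_left (f := fun t => (∫⁻ y, ENNReal.ofReal (heatE t (0 - y)) ∂ν)
              + ∫⁻ y, ENNReal.ofReal (heatE t (0 + y)) ∂ν)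
              (hu1.lintegral_prod_right.add hu2.lintegral_prod_right),
            lintegral_add_left hu1.lintegral_prod_right]
      _ = (∫⁻ t in F, (∫⁻ y, ENNReal.ofReal (heatE t (0 - y)) ∂ν))
            + (∫⁻ t in F, (∫⁻ y, ENNReal.ofReal (heatE t (0 + y)) ∂ν))
            + 2 * ∫⁻ t in F, (∫⁻ s, ENNReal.ofReal (heatE (t - s) 0) ∂μ) := by
          rw [lintegral_const_mul' _ _ (by norm_num)]
      _ ≤ ν univ * K + ν univ * K + 2 * (μ univ * K) :=
          add_le_add (add_le_add hs1 hs2) (mul_le_mul_right hs3 2)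
      _ = (2 * (ν univ) + 2 * (μ univ)) * K := by ring
      _ = (6 * (ν univ) + 6 * (μ univ)) * ((volume F) ^ ((1:ℝ)/2)) := by rw [hK]; ring
      _ = ENNReal.ofReal (6 * (aν + aμ)) * ((volume F) ^ ((1:ℝ)/2)) := by rw [hcoef]
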